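/- If E_P[h·(v − u*)] ≥ 0 for every 𝒢-measurable v : Ω → U with E_P[|v|²] < ∞, then for every fixed u ∈ U one has h(ω)·(u − u*(ω)) ≥ 0 for P-almost every ω. -/

import Mathlib

open MeasureTheory
open scoped RealInnerProductSpace

noncomputable section

/-- `ℝ^m` with the Euclidean norm. -/
abbrev Vec (m : ℕ) : Type := EuclideanSpace ℝ (Fin m)

/-- If `E_P[h·(v − u*)] ≥ 0` for every `𝒢`-measurable `v : Ω → U` with
`E_P[|v|²] < ∞`, then for every fixed `u ∈ U` one has `h(ω)·(u − u*(ω)) ≥ 0` for `P`-almost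
every `ω`. -/
theorem pointwise_variational_inequality
    {Ω : Type} [mΩ : MeasurableSpace Ω] (P : Measure Ω) [IsProbabilityMeasure P]
    (𝒢 : MeasurableSpace Ω) (h𝒢 : 𝒢 ≤ mΩ)
    (m : ℕ) (U : Set (Vec m)) (hUne : U.Nonempty) (hUconv : Convex ℝ U)
    -- `h` is `𝒢`-measurable with `E_P[|h||v|] < ∞` for every square-integrable `𝒢`-measurable `v`
    (h : Ω → Vec m) (hhmeas : Measurable[𝒢] h)
    (hhint : ∀ v : Ω → Vec m, Measurable[𝒢] v → Integrable (fun ω => ‖v ω‖ ^ 2) P →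
      Integrable (fun ω => ‖h ω‖ * ‖v ω‖) P)
    -- `u*` is `𝒢`-measurable, `U`-valued and square-integrable
    (ustar : Ω → Vec m) (hustarmeas : Measurable[𝒢] ustar) (hustarval : ∀ ω, ustar ω ∈ U)
    (hustarint : Integrable (fun ω => ‖ustar ω‖ ^ 2) P)
    -- the integral variational inequality
    (hvar : ∀ v : Ω → Vec m, Measurable[𝒢] v → (∀ ω, v ω ∈ U) →
      Integrable (fun ω => ‖v ω‖ ^ 2) P →
      0 ≤ ∫ ω, ⟪h ω, v ω - ustar ω⟫ ∂P) :
    ∀ u ∈ U, ∀ᵐ ω ∂P, 0 ≤ ⟪h ω, u - ustar ω⟫ := by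
  intro u hu
  -- the pointwise function
  set f : Ω → ℝ := fun ω => ⟪h ω, u - ustar ω⟫ with hf
  have hfmeas : Measurable[𝒢] f := by
    exact Measurable.inner (𝕜 := ℝ) hhmeas (measurable_const.sub hustarmeas)
  have hA : MeasurableSet[𝒢] {ω | f ω < 0} :=
    measurableSet_lt hfmeas measurable_const
  set A : Set Ω := {ω | f ω < 0} with hAdef
  -- integrability of f
  have hconst_int : Integrable (fun ω => ‖h ω‖ * ‖u‖) P := by
    apply hhint (fun _ => u) measurable_const
    exact integrable_const _
  have hhu_int : Integrable (fun ω => ‖h ω‖ * ‖ustar ω‖) P :=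
    hhint ustar hustarmeas hustarint
  have hfint : Integrable f P := by
    have hmeas : AEStronglyMeasurable[mΩ] f P :=
      (hfmeas.mono h𝒢 le_rfl).aestronglyMeasurable
    refine Integrable.mono' (hconst_int.add hhu_int) hmeas ?_
    filter_upwards with ω
    have h1 : |f ω| ≤ ‖h ω‖ * ‖u - ustar ω‖ := by
      rw [abs_le]
      constructor
      · have := abs_real_inner_le_norm (h ω) (u - ustar ω)
        linarith [neg_abs_le (f ω), abs_real_inner_le_norm (h ω) (u - ustar ω)]
      · exact le_trans (le_abs_self _) (abs_real_inner_le_norm _ _)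
    calc ‖f ω‖ = |f ω| := rfl
      _ ≤ ‖h ω‖ * ‖u - ustar ω‖ := h1
      _ ≤ ‖h ω‖ * (‖u‖ + ‖ustar ω‖) := by
          gcongr
          exact (norm_sub_le _ _)
      _ = ‖h ω‖ * ‖u‖ + ‖h ω‖ * ‖ustar ω‖ := by ring
  -- the test function
  set v : Ω → Vec m := A.piecewise (fun _ => u) ustar with hvdef
  have hvmeas : Measurable[𝒢] v := Measurable.piecewise hA measurable_const hustarmeas
  have hvval : ∀ ω, v ω ∈ U := by
    intro ω
    by_cases hω : ω ∈ A
    · simp [hvdef, Set.piecewise, hω, hu]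
    · simp [hvdef, Set.piecewise, hω, hustarval ω]
  have hvint : Integrable (fun ω => ‖v ω‖ ^ 2) P := by
    refine Integrable.mono' ((integrable_const (‖u‖ ^ 2)).add hustarint) ?_ ?_
    · have : Measurable[𝒢] fun ω => ‖v ω‖ ^ 2 := (hvmeas.norm).pow measurable_const
      exact (this.mono h𝒢 le_rfl).aestronglyMeasurable
    · filter_upwards with ω
      by_cases hω : ω ∈ A
      · simp only [hvdef, Set.piecewise, hω, if_pos]
        have : (0:ℝ) ≤ ‖ustar ω‖ ^ 2 := by positivity
        simp only [Real.norm_eq_abs, abs_of_nonneg (by positivity : (0:ℝ) ≤ ‖u‖ ^ 2), Pi.add_apply]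
        linarith
      · simp only [hvdef, Set.piecewise, hω, if_neg, not_false_iff]
        have : (0:ℝ) ≤ ‖u‖ ^ 2 := by positivity
        simp only [Real.norm_eq_abs, abs_of_nonneg (by positivity : (0:ℝ) ≤ ‖ustar ω‖ ^ 2), Pi.add_apply]
        linarith
  -- the integrand for v equals the indicator of f on A
  have hkey : (fun ω => ⟪h ω, v ω - ustar ω⟫) = A.indicator f := by
    funext ω
    by_cases hω : ω ∈ A
    · simp [hvdef, Set.piecewise, hω, Set.indicator_of_mem hω, hf]
    · simp [hvdef, Set.piecewise, hω, Set.indicator_of_notMem hω, hf]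
  have hint0 : 0 ≤ ∫ ω, A.indicator f ω ∂P := by
    have := hvar v hvmeas hvval hvint
    rwa [hkey] at this
  have hgint : Integrable (A.indicator f) P := by
    have hm : Measurable[𝒢] (A.indicator f) := hfmeas.indicator hA
    refine Integrable.mono' hfint.norm ((hm.mono h𝒢 le_rfl).aestronglyMeasurable) ?_
    filter_upwards with ω
    by_cases hω : ω ∈ A
    · simp [Set.indicator_of_mem hω]
    · simp [Set.indicator_of_notMem hω]
  have hgle : ∀ ω, A.indicator f ω ≤ 0 := by
    intro ω
    by_cases hω : ω ∈ A
    · rw [Set.indicator_of_mem hω]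
      exact le_of_lt hω
    · rw [Set.indicator_of_notMem hω]
  have hneg : Integrable (fun ω => -(A.indicator f ω)) P := hgint.neg
  have hzero : (fun ω => -(A.indicator f ω)) =ᵐ[P] 0 := by
    have hi : ∫ ω, -(A.indicator f ω) ∂P = 0 := by
      rw [integral_neg]
      have hle : ∫ ω, A.indicator f ω ∂P ≤ 0 :=
        integral_nonpos hgle
      linarith
    have := (integral_eq_zero_iff_of_nonneg (fun ω => neg_nonneg.mpr (hgle ω)) hneg).mp hi
    exact this
  filter_upwards [hzero] with ω hω
  by_contra hcon
  push_neg at hcon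
  have hωA : ω ∈ A := hcon
  have : -(A.indicator f ω) = 0 := hω
  rw [Set.indicator_of_mem hωA] at this
  have : f ω = 0 := by linarith
  exact absurd this (ne_of_lt hωA)


end
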